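/- Let f, g : H → ℝ ∪ {∞} be closed, proper, convex functions on a real Hilbert space H and let γ > 0. Then a point x ∈ H satisfies 0 ∈ ∂f(x) + ∂g(x) if and only if there exists z ∈ H with T_PRS(z) = z and x = prox_{γg}(z). Moreover, if z* is a fixed point of T_PRS and x* := prox_{γg}(z*), then z* − x* ∈ γ·∂g(x*). -/

import Mathlib

private lemma limit_aux (A C : ℝ) (hC : 0 ≤ C)
    (h : ∀ t : ℝ, 0 < t → t ≤ 1 → A ≤ C * t) : A ≤ 0 := by
  by_contra hA
  push_neg at hA
  rcases eq_or_lt_of_le hC with hC0 | hC0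
  · have := h 1 one_pos le_rfl
    nlinarith
  · have ht1 : 0 < A / (2 * C) := by positivity
    have h1 := h (min 1 (A / (2 * C))) (lt_min one_pos ht1) (min_le_left _ _)
    have h2 : C * min 1 (A / (2 * C)) ≤ C * (A / (2 * C)) :=
      mul_le_mul_of_nonneg_left (min_le_right _ _) hC
    have h3 : C * (A / (2 * C)) = A / 2 := by field_simp
    nlinarith

private lemma prox_iff_subgrad {H : Type*} [NormedAddCommGroup H] [InnerProductSpace ℝ H]
    (h : H → EReal) (hbot : ∀ x, h x ≠ ⊥) (hproper : ∃ x, h x ≠ ⊤)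
    (hconv : ∀ x y : H, ∀ a b : ℝ, 0 ≤ a → 0 ≤ b → a + b = 1 →
      h (a • x + b • y) ≤ (a : EReal) * h x + (b : EReal) * h y)
    (γ : ℝ) (hγ : 0 < γ) (x p : H) :
    (∀ y : H, h p + ((1 / (2 * γ) * ‖p - x‖ ^ 2 : ℝ) : EReal) ≤
        h y + ((1 / (2 * γ) * ‖y - x‖ ^ 2 : ℝ) : EReal)) ↔
    (∀ w : H, h p + ((inner ℝ (γ⁻¹ • (x - p)) (w - p) : ℝ) : EReal) ≤ h w) := by
  constructor
  · intro hmin w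
    -- h p ≠ ⊤
    obtain ⟨y0, hy0⟩ := hproper
    have hptop : h p ≠ ⊤ := by
      intro htop
      have h1 := hmin y0
      rw [htop] at h1
      have : (⊤ : EReal) + ((1 / (2 * γ) * ‖p - x‖ ^ 2 : ℝ) : EReal) = ⊤ :=
        EReal.top_add_coe _
      rw [this, top_le_iff] at h1
      have : h y0 + ((1 / (2 * γ) * ‖y0 - x‖ ^ 2 : ℝ) : EReal) < ⊤ :=
        EReal.add_lt_top hy0 (EReal.coe_ne_top _)
      rw [h1] at this
      exact lt_irrefl _ this
    by_cases hwtop : h w = ⊤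
    · rw [hwtop]; exact le_top
    set r : ℝ := (h p).toReal with hr
    set s : ℝ := (h w).toReal with hs
    have hpr : h p = (r : EReal) := (EReal.coe_toReal hptop (hbot p)).symm
    have hws : h w = (s : EReal) := (EReal.coe_toReal hwtop (hbot w)).symm
    set c : ℝ := 1 / (2 * γ) with hc
    have hcpos : 0 < c := by positivity
    have key : ∀ t : ℝ, 0 < t → t ≤ 1 →
        r - s - 2 * c * (inner ℝ (p - x) (w - p) : ℝ) ≤ c * ‖w - p‖ ^ 2 * t := by
      intro t ht0 ht1
      have h1 := hmin ((1 - t) • p + t • w)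
      have h2 := hconv p w (1 - t) t (by linarith) (le_of_lt ht0) (by ring)
      rw [hpr, hws] at h2
      have h2' : h ((1 - t) • p + t • w) ≤ (((1 - t) * r + t * s : ℝ) : EReal) := by
        rw [EReal.coe_add, EReal.coe_mul, EReal.coe_mul] at *
        exact h2
      have h3 : (r : EReal) + ((c * ‖p - x‖ ^ 2 : ℝ) : EReal) ≤
          (((1 - t) * r + t * s : ℝ) : EReal) +
            ((c * ‖(1 - t) • p + t • w - x‖ ^ 2 : ℝ) : EReal) := by
        rw [hpr] at h1
        exact le_trans h1 (add_le_add_left h2' _)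
      rw [← EReal.coe_add, ← EReal.coe_add, EReal.coe_le_coe_iff] at h3
      have hexp : (1 - t) • p + t • w - x = (p - x) + t • (w - p) := by
        rw [sub_smul, smul_sub, one_smul]
        abel
      have hnorm : ‖(1 - t) • p + t • w - x‖ ^ 2 =
          ‖p - x‖ ^ 2 + 2 * (t * (inner ℝ (p - x) (w - p) : ℝ)) + t ^ 2 * ‖w - p‖ ^ 2 := by
        rw [hexp, norm_add_sq_real, real_inner_smul_right, norm_smul]
        simp [abs_of_pos ht0, mul_pow]
      rw [hnorm] at h3
      have : t * (r - s - 2 * c * (inner ℝ (p - x) (w - p) : ℝ)) ≤ t * (c * ‖w - p‖ ^ 2 * t) := by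
        nlinarith
      exact le_of_mul_le_mul_left (by linarith [this]) ht0
    have hA := limit_aux _ _ (by positivity) key
    have hfin : r + γ⁻¹ * (inner ℝ (x - p) (w - p) : ℝ) ≤ s := by
      have h2c : 2 * c = γ⁻¹ := by rw [hc]; field_simp
      have hio : (inner ℝ (x - p) (w - p) : ℝ) = -(inner ℝ (p - x) (w - p) : ℝ) := by
        rw [← inner_neg_left]; simp
      rw [hio, ← h2c]
      linarith
    rw [hpr, hws, real_inner_smul_left, ← EReal.coe_add, EReal.coe_le_coe_iff]
    exact hfin
  · intro hsub y
    set c : ℝ := 1 / (2 * γ) with hc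
    set u : H := γ⁻¹ • (x - p) with hu
    have hreal : c * ‖p - x‖ ^ 2 ≤ (inner ℝ u (y - p) : ℝ) + c * ‖y - x‖ ^ 2 := by
      have hexp : y - x = (y - p) + (p - x) := by abel
      have hnorm : ‖y - x‖ ^ 2 = ‖y - p‖ ^ 2 + 2 * (inner ℝ (y - p) (p - x) : ℝ) + ‖p - x‖ ^ 2 := by
        rw [hexp, norm_add_sq_real]
      have hiu : (inner ℝ u (y - p) : ℝ) = γ⁻¹ * (inner ℝ (x - p) (y - p) : ℝ) := by
        rw [hu, real_inner_smul_left]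
      have hsym : (inner ℝ (x - p) (y - p) : ℝ) = -(inner ℝ (y - p) (p - x) : ℝ) := by
        rw [real_inner_comm, ← inner_neg_right]; simp
      have h2c : 2 * c = γ⁻¹ := by rw [hc]; field_simp
      have hnn : 0 ≤ c * ‖y - p‖ ^ 2 := by positivity
      rw [hiu, hsym, hnorm]
      nlinarith
    have h1 := hsub y
    calc h p + ((c * ‖p - x‖ ^ 2 : ℝ) : EReal)
        ≤ h p + (((inner ℝ u (y - p) : ℝ) + c * ‖y - x‖ ^ 2 : ℝ) : EReal) := by
          exact add_le_add_right (EReal.coe_le_coe_iff.2 hreal) _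
      _ = (h p + ((inner ℝ u (y - p) : ℝ) : EReal)) + ((c * ‖y - x‖ ^ 2 : ℝ) : EReal) := by
          rw [EReal.coe_add, add_assoc]
      _ ≤ h y + ((c * ‖y - x‖ ^ 2 : ℝ) : EReal) := add_le_add_left h1 _


/-- Lemma (optimality conditions of `T_PRS`): for closed, proper, convex
`f, g : H → ℝ ∪ {∞}` and `γ > 0`, a point `x` satisfies `0 ∈ ∂f(x) + ∂g(x)` if and only if
there is `z` with `T_PRS z = z` and `x = prox_{γg}(z)`; moreover, if `z*` is a fixed point of
`T_PRS` and `x* = prox_{γg}(z*)`, then `z* − x* ∈ γ ∂g(x*)`. -/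
theorem prs_optimality_conditions
    {H : Type*} [NormedAddCommGroup H] [InnerProductSpace ℝ H] [CompleteSpace H]
    (f g : H → EReal)
    (hf_bot : ∀ x, f x ≠ ⊥) (hg_bot : ∀ x, g x ≠ ⊥)
    (hf_proper : ∃ x, f x ≠ ⊤) (hg_proper : ∃ x, g x ≠ ⊤)
    (hf_lsc : LowerSemicontinuous f) (hg_lsc : LowerSemicontinuous g)
    (hf_conv : ∀ x y : H, ∀ a b : ℝ, 0 ≤ a → 0 ≤ b → a + b = 1 →
      f (a • x + b • y) ≤ (a : EReal) * f x + (b : EReal) * f y)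
    (hg_conv : ∀ x y : H, ∀ a b : ℝ, 0 ≤ a → 0 ≤ b → a + b = 1 →
      g (a • x + b • y) ≤ (a : EReal) * g x + (b : EReal) * g y)
    (γ : ℝ) (hγ : 0 < γ)
    (proxf proxg : H → H)
    (hproxf : ∀ x p : H, proxf x = p ↔
      ∀ y : H, f p + ((1 / (2 * γ) * ‖p - x‖ ^ 2 : ℝ) : EReal) ≤
        f y + ((1 / (2 * γ) * ‖y - x‖ ^ 2 : ℝ) : EReal))
    (hproxg : ∀ x p : H, proxg x = p ↔
      ∀ y : H, g p + ((1 / (2 * γ) * ‖p - x‖ ^ 2 : ℝ) : EReal) ≤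
        g y + ((1 / (2 * γ) * ‖y - x‖ ^ 2 : ℝ) : EReal))
    (T : H → H)
    (hT : ∀ w : H, T w = (2 : ℝ) • proxf ((2 : ℝ) • proxg w - w) - ((2 : ℝ) • proxg w - w)) :
    (∀ x : H,
      (∃ u v : H,
        (∀ w : H, f x + ((inner ℝ u (w - x) : ℝ) : EReal) ≤ f w) ∧
        (∀ w : H, g x + ((inner ℝ v (w - x) : ℝ) : EReal) ≤ g w) ∧
        u + v = 0) ↔
      (∃ zf : H, T zf = zf ∧ proxg zf = x)) ∧
    (∀ zstar : H, T zstar = zstar →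
      ∃ u : H,
        (∀ w : H, g (proxg zstar) + ((inner ℝ u (w - proxg zstar) : ℝ) : EReal) ≤ g w) ∧
        zstar - proxg zstar = γ • u) := by
  have proxg_iff : ∀ z x : H, proxg z = x ↔
      (∀ w : H, g x + ((inner ℝ (γ⁻¹ • (z - x)) (w - x) : ℝ) : EReal) ≤ g w) := by
    intro z x
    rw [hproxg z x, prox_iff_subgrad g hg_bot hg_proper hg_conv γ hγ z x]
  have proxf_iff : ∀ z x : H, proxf z = x ↔
      (∀ w : H, f x + ((inner ℝ (γ⁻¹ • (z - x)) (w - x) : ℝ) : EReal) ≤ f w) := by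
    intro z x
    rw [hproxf z x, prox_iff_subgrad f hf_bot hf_proper hf_conv γ hγ z x]
  constructor
  · intro x
    constructor
    · rintro ⟨u, v, hu, hv, huv⟩
      have huv' : u = -v := eq_neg_of_add_eq_zero_left huv
      refine ⟨x + γ • v, ?_, ?_⟩
      · have hpg : proxg (x + γ • v) = x := by
          rw [proxg_iff]
          have hvv : γ⁻¹ • (x + γ • v - x) = v := by
            rw [add_sub_cancel_left, smul_smul, inv_mul_cancel₀ hγ.ne', one_smul]
          rw [hvv]; exact hv
        have hpf : proxf ((2 : ℝ) • x - (x + γ • v)) = x := by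
          rw [proxf_iff]
          have hvv : γ⁻¹ • ((2 : ℝ) • x - (x + γ • v) - x) = u := by
            rw [huv']
            have : (2 : ℝ) • x - (x + γ • v) - x = -(γ • v) := by module
            rw [this, smul_neg, smul_smul, inv_mul_cancel₀ hγ.ne', one_smul]
          rw [hvv]; exact hu
        rw [hT, hpg, hpf]
        module
      · rw [proxg_iff]
        have hvv : γ⁻¹ • (x + γ • v - x) = v := by
          rw [add_sub_cancel_left, smul_smul, inv_mul_cancel₀ hγ.ne', one_smul]
        rw [hvv]; exact hv
    · rintro ⟨z, hz, hx⟩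
      have hv := (proxg_iff z x).mp hx
      rw [hT, hx] at hz
      have hpf : proxf ((2 : ℝ) • x - z) = x := by
        apply smul_right_injective H (two_ne_zero (α := ℝ))
        linear_combination (norm := module) hz
      have hu := (proxf_iff _ x).mp hpf
      exact ⟨γ⁻¹ • ((2 : ℝ) • x - z - x), γ⁻¹ • (z - x), hu, hv, by module⟩
  · intro zstar _
    refine ⟨γ⁻¹ • (zstar - proxg zstar), (proxg_iff zstar (proxg zstar)).mp rfl, ?_⟩
    rw [smul_smul, mul_inv_cancel₀ hγ.ne', one_smul]
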